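/- Let n ≥ 2 and let e = e_1 e_2 ⋯ e_n ∈ I_n(0012) with e ≠ 0 1 ⋯ (n−1), and let γ(e) = e_1 e_2 ⋯ e_{n−1}. If last(e) > srpt(γ(e)), then srpt(e) = srpt(γ(e)). -/

import Mathlib

/-- `e : Fin n → ℕ` is an inversion sequence: `e i ≤ i` (0-indexed). -/
def IsInvSeq {n : ℕ} (e : Fin n → ℕ) : Prop := ∀ i : Fin n, e i ≤ (i : ℕ)

/-- `e` avoids the pattern 0012: there are no indices `i < j < k < l`
with `e i = e j < e k < e l`. -/
def Avoids0012 {n : ℕ} (e : Fin n → ℕ) : Prop :=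
  ¬ ∃ i j k l : Fin n, i < j ∧ j < k ∧ k < l ∧ e i = e j ∧ e j < e k ∧ e k < e l

/-- The set `I_n(0012)` of inversion sequences of length `n` avoiding `0012`. -/
def InvSeq0012 (n : ℕ) : Set (Fin n → ℕ) := {e | IsInvSeq e ∧ Avoids0012 e}

/-- `R(e)`: the set of values appearing more than once in `e`. -/
def repeats {n : ℕ} (e : Fin n → ℕ) : Set ℕ :=
  {m | ∃ i j : Fin n, i ≠ j ∧ e i = m ∧ e j = m}

open Classical in
/-- `srpt e = min R(e)` if `R(e) ≠ ∅`, and `n - 1` otherwise. -/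
noncomputable def srpt {n : ℕ} (e : Fin n → ℕ) : ℕ :=
  if (repeats e).Nonempty then sInf (repeats e) else n - 1

/-- The last entry of `e` (and `0` for the empty sequence). -/
def lastEntry {n : ℕ} (e : Fin n → ℕ) : ℕ :=
  if h : 0 < n then e ⟨n - 1, by omega⟩ else 0

/-- `γ(e)`: the sequence `e` with its last entry removed. -/
def gammaSeq {n : ℕ} (e : Fin n → ℕ) : Fin (n - 1) → ℕ :=
  fun i => e (Fin.castLE (Nat.sub_le n 1) i)

/-- `f n k ℓ`: the number of `e ∈ I_n(0012)` with `srpt e = k` and `last e = ℓ`. -/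
noncomputable def f (n k ℓ : ℕ) : ℕ :=
  Set.ncard {e : Fin n → ℕ | e ∈ InvSeq0012 n ∧ srpt e = k ∧ lastEntry e = ℓ}

/-- For `n ≥ 2` and `e ∈ I_n(0012)` with `e ≠ 0 1 ⋯ (n-1)`:
if `last e > srpt (γ e)`, then `srpt e = srpt (γ e)`. -/

lemma inj_id {m : ℕ} (g : Fin m → ℕ) (hg : ∀ i, g i ≤ (i : ℕ))
    (hinj : ∀ i j : Fin m, i ≠ j → g i ≠ g j) : ∀ i, g i = (i : ℕ) := by
  have key : ∀ k : ℕ, ∀ hk : k < m, g ⟨k, hk⟩ = k := by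
    intro k
    induction k using Nat.strong_induction_on with
    | _ k IH =>
      intro hk
      by_contra hc
      have h1 : g ⟨k, hk⟩ < k := lt_of_le_of_ne (hg ⟨k, hk⟩) hc
      have hlt : g ⟨k, hk⟩ < m := lt_trans h1 hk
      have heq : g ⟨g ⟨k, hk⟩, hlt⟩ = g ⟨k, hk⟩ := IH _ h1 hlt
      exact hinj ⟨g ⟨k, hk⟩, hlt⟩ ⟨k, hk⟩ (by simp [Fin.ext_iff]; omega) heq
  intro i
  exact key i i.isLt

theorem stmt3 (n : ℕ) (hn : 2 ≤ n) (e : Fin n → ℕ) (he : e ∈ InvSeq0012 n)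
    (hne : e ≠ fun (i : Fin n) => (i : ℕ))
    (h : srpt (gammaSeq e) < lastEntry e) :
    srpt e = srpt (gammaSeq e) := by
  by_cases hR : (repeats (gammaSeq e)).Nonempty
  · -- main case
    have hm : srpt (gammaSeq e) = sInf (repeats (gammaSeq e)) := by
      simp [srpt, hR]
    set m := sInf (repeats (gammaSeq e)) with hmdef
    obtain ⟨i, j, hij, hi, hj⟩ := Nat.sInf_mem hR
    have hmem : m ∈ repeats e := by
      refine ⟨Fin.castLE (Nat.sub_le n 1) i, Fin.castLE (Nat.sub_le n 1) j, ?_, hi, hj⟩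
      simp [Fin.ext_iff] at hij ⊢; exact hij
    have hRe : (repeats e).Nonempty := ⟨m, hmem⟩
    have hse : srpt e = sInf (repeats e) := by simp [srpt, hRe]
    rw [hse, hm]
    refine le_antisymm (Nat.sInf_le hmem) ?_
    obtain ⟨a, b, hab, ha, hb⟩ := Nat.sInf_mem hRe
    set p := sInf (repeats e)
    rcases lt_or_ge (a : ℕ) (n-1) with hA | hA
    · rcases lt_or_ge (b : ℕ) (n-1) with hB | hB
      · -- both in prefix
        refine Nat.sInf_le ⟨⟨a, hA⟩, ⟨b, hB⟩, ?_, ?_, ?_⟩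
        · simp [Fin.ext_iff] at hab ⊢; omega
        · simpa [gammaSeq, Fin.castLE] using ha
        · simpa [gammaSeq, Fin.castLE] using hb
      · have hbv : (b : ℕ) = n - 1 := by omega
        have : lastEntry e = p := by
          have h0 : (0:ℕ) < n := by omega
          simp only [lastEntry, dif_pos h0]
          have : (⟨n-1, by omega⟩ : Fin n) = b := by simp [Fin.ext_iff]; omega
          rw [this]; exact hb
        rw [hm] at h; omega
    · have hav : (a : ℕ) = n - 1 := by omega
      have : lastEntry e = p := by
        have h0 : (0:ℕ) < n := by omega
        simp only [lastEntry, dif_pos h0]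
        have : (⟨n-1, by omega⟩ : Fin n) = a := by simp [Fin.ext_iff]; omega
        rw [this]; exact ha
      rw [hm] at h; omega
  · -- gamma e injective, so gamma e = identity, so e = identity, contradiction
    exfalso
    have hinj : ∀ i j : Fin (n-1), i ≠ j → gammaSeq e i ≠ gammaSeq e j := by
      intro i j hij hc
      exact hR ⟨gammaSeq e i, i, j, hij, rfl, hc.symm⟩
    have hbd : ∀ i : Fin (n-1), gammaSeq e i ≤ (i : ℕ) := by
      intro i; exact he.1 _
    have hid := inj_id (gammaSeq e) hbd hinj
    have hs : srpt (gammaSeq e) = n - 1 - 1 := by simp [srpt, hR]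
    have hlast : lastEntry e ≤ n - 1 := by
      have h0 : (0:ℕ) < n := by omega
      simp only [lastEntry, dif_pos h0]
      exact he.1 _
    apply hne
    funext i
    rcases lt_or_ge (i : ℕ) (n-1) with hi | hi
    · have := hid ⟨i, hi⟩
      simpa [gammaSeq, Fin.castLE, Fin.ext_iff] using this
    · have hiv : (i : ℕ) = n - 1 := by omega
      have : lastEntry e = e i := by
        have h0 : (0:ℕ) < n := by omega
        simp only [lastEntry, dif_pos h0]
        congr 1; simp [Fin.ext_iff]; omega
      rw [hs] at h
      rw [this] at h hlast
      omega
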